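/- In the canonical model of Λ, the relation w ≈_α v ∘ R_□ composite, i.e., the relation defined by membership in α_k[w] = {v : for all ψ, K_α□ψ ∈ w implies ψ ∈ v}, is an equivalence relation on maximal consistent sets, because the S5 axioms for the composite operator K_α□ are derivable in Λ. -/
import Mathlib


/-- Formulas of the language `L_KO`, with operators `□`, `[α]`, `K_α`,
`⊙[α]` (objective ought) and `⊙_S[α]` (subjective ought). -/
inductive Form (Ags : Type) : Type
  | atom : Nat → Form Ags
  | bot  : Form Ags
  | imp  : Form Ags → Form Ags → Form Ags
  | box  : Form Ags → Form Ags
  | act  : Ags → Form Ags → Form Ags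
  | know : Ags → Form Ags → Form Ags
  | obj  : Ags → Form Ags → Form Ags
  | subj : Ags → Form Ags → Form Ags

namespace Form

variable {Ags : Type}

def neg (φ : Form Ags) : Form Ags := imp φ bot
def dia (φ : Form Ags) : Form Ags := neg (box (neg φ))
def conj (φ ψ : Form Ags) : Form Ags := neg (imp φ (neg ψ))
def disj (φ ψ : Form Ags) : Form Ags := imp (neg φ) ψ
def conjl : List (Form Ags) → Form Ags
  | [] => neg bot
  | φ :: l => conj φ (conjl l)

end Form

open Form

/-- The Hilbert-style proof system `Λ`. -/
inductive Prov {Ags : Type} : Form Ags → Prop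
  | pl1 (φ ψ : Form Ags) : Prov (imp φ (imp ψ φ))
  | pl2 (φ ψ χ : Form Ags) :
      Prov (imp (imp φ (imp ψ χ)) (imp (imp φ ψ) (imp φ χ)))
  | pl3 (φ ψ : Form Ags) : Prov (imp (imp (neg φ) (neg ψ)) (imp ψ φ))
  | mp {φ ψ : Form Ags} : Prov (imp φ ψ) → Prov φ → Prov ψ
  -- S5 axioms and necessitation for □
  | boxK (φ ψ : Form Ags) : Prov (imp (box (imp φ ψ)) (imp (box φ) (box ψ)))
  | boxT (φ : Form Ags) : Prov (imp (box φ) φ)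
  | box4 (φ : Form Ags) : Prov (imp (box φ) (box (box φ)))
  | box5 (φ : Form Ags) : Prov (imp (dia φ) (box (dia φ)))
  | boxNec {φ : Form Ags} : Prov φ → Prov (box φ)
  -- S5 axioms and necessitation for [α]
  | actK (a : Ags) (φ ψ : Form Ags) :
      Prov (imp (act a (imp φ ψ)) (imp (act a φ) (act a ψ)))
  | actT (a : Ags) (φ : Form Ags) : Prov (imp (act a φ) φ)
  | act4 (a : Ags) (φ : Form Ags) : Prov (imp (act a φ) (act a (act a φ)))
  | act5 (a : Ags) (φ : Form Ags) :
      Prov (imp (neg (act a φ)) (act a (neg (act a φ))))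
  | actNec {φ : Form Ags} (a : Ags) : Prov φ → Prov (act a φ)
  -- S5 axioms and necessitation for K_α
  | knowK (a : Ags) (φ ψ : Form Ags) :
      Prov (imp (know a (imp φ ψ)) (imp (know a φ) (know a ψ)))
  | knowT (a : Ags) (φ : Form Ags) : Prov (imp (know a φ) φ)
  | know4 (a : Ags) (φ : Form Ags) : Prov (imp (know a φ) (know a (know a φ)))
  | know5 (a : Ags) (φ : Form Ags) :
      Prov (imp (neg (know a φ)) (know a (neg (know a φ))))
  | knowNec {φ : Form Ags} (a : Ags) : Prov φ → Prov (know a φ)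
  -- deontic-epistemic axioms
  | a1 (a : Ags) (φ ψ : Form Ags) :
      Prov (imp (obj a (imp φ ψ)) (imp (obj a φ) (obj a ψ)))
  | a2 (a : Ags) (φ : Form Ags) :
      Prov (imp (box φ) (conj (act a φ) (obj a φ)))
  | a3 (a : Ags) (φ : Form Ags) :
      Prov (disj (box (obj a φ)) (box (neg (obj a φ))))
  | a4 (a : Ags) (φ : Form Ags) : Prov (imp (obj a φ) (obj a (act a φ)))
  | oic (a : Ags) (φ : Form Ags) : Prov (imp (obj a φ) (dia (act a φ)))
  | ia (l : List (Ags × Form Ags)) (h : l.Pairwise fun p q => p.1 ≠ q.1) :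
      Prov (imp (conjl (l.map fun p => dia (act p.1 p.2)))
                (dia (conjl (l.map fun p => act p.1 p.2))))
  | a5 (a : Ags) (φ ψ : Form Ags) :
      Prov (imp (subj a (imp φ ψ)) (imp (subj a φ) (subj a ψ)))
  | a6 (a : Ags) (φ : Form Ags) : Prov (imp (subj a φ) (subj a (know a φ)))
  | oacAx (a : Ags) (φ : Form Ags) : Prov (imp (know a φ) (act a φ))
  | unifH (a : Ags) (φ : Form Ags) :
      Prov (imp (dia (know a φ)) (know a (dia φ)))
  | sN (a : Ags) (φ : Form Ags) : Prov (imp (know a (box φ)) (subj a φ))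
  | sOic (a : Ags) (φ : Form Ags) : Prov (imp (subj a φ) (dia (know a φ)))
  | clAx (a : Ags) (φ : Form Ags) :
      Prov (imp (subj a φ) (know a (box (subj a φ))))
  | objNec {φ : Form Ags} (a : Ags) : Prov φ → Prov (obj a φ)
  | subjNec {φ : Form Ags} (a : Ags) : Prov φ → Prov (subj a φ)

/-- `Λ`-consistency of a set of formulas. -/
def Consistent {Ags : Type} (Γ : Set (Form Ags)) : Prop :=
  ¬ ∃ l : List (Form Ags), (∀ φ ∈ l, φ ∈ Γ) ∧ Prov (imp (conjl l) bot)

/-- Maximal `Λ`-consistent set. -/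
def MCS {Ags : Type} (w : Set (Form Ags)) : Prop :=
  Consistent w ∧ ∀ φ : Form Ags, φ ∈ w ∨ neg φ ∈ w

/-- Canonical relation for `□`. -/
def RboxC {Ags : Type} (w v : Set (Form Ags)) : Prop :=
  ∀ φ : Form Ags, box φ ∈ w → φ ∈ v

/-- Canonical relation for `[α]`. -/
def RactC {Ags : Type} (a : Ags) (w v : Set (Form Ags)) : Prop :=
  ∀ φ : Form Ags, act a φ ∈ w → φ ∈ v

/-- Canonical relation for `K_α`. -/
def RknowC {Ags : Type} (a : Ags) (w v : Set (Form Ags)) : Prop :=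
  ∀ φ : Form Ags, know a φ ∈ w → φ ∈ v

/-- `Σ_α^w = {[α]φ : ⊙[α]φ ∈ w}`. -/
def SigmaSet {Ags : Type} (a : Ags) (w : Set (Form Ags)) : Set (Form Ags) :=
  {ψ | ∃ φ, ψ = act a φ ∧ obj a φ ∈ w}

/-- `Γ_α^w = {K_αφ : ⊙_S[α]φ ∈ w}`. -/
def GammaSet {Ags : Type} (a : Ags) (w : Set (Form Ags)) : Set (Form Ags) :=
  {ψ | ∃ φ, ψ = know a φ ∧ subj a φ ∈ w}

/-- `v ∈ α_k[w]`: the canonical relation of the composite operator `K_α□`. -/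
def alphak {Ags : Type} (a : Ags) (w v : Set (Form Ags)) : Prop :=
  ∀ φ : Form Ags, know a (box φ) ∈ w → φ ∈ v

section Helpers
namespace ProvAux
open Form Prov

variable {Ags : Type}

theorem ded {φ ψ : Form Ags} (h : Prov ψ) : Prov (imp φ ψ) := mp (pl1 _ _) h

theorem mpd {φ ψ χ : Form Ags} (h1 : Prov (imp φ (imp ψ χ)))
    (h2 : Prov (imp φ ψ)) : Prov (imp φ χ) := mp (mp (pl2 _ _ _) h1) h2

theorem provId (φ : Form Ags) : Prov (imp φ φ) :=
  mpd (pl1 φ (imp φ φ)) (pl1 φ φ)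

theorem itrans {φ ψ χ : Form Ags} (h1 : Prov (imp φ ψ))
    (h2 : Prov (imp ψ χ)) : Prov (imp φ χ) := mpd (ded h2) h1

theorem swap {φ ψ χ : Form Ags} (h : Prov (imp φ (imp ψ χ))) :
    Prov (imp ψ (imp φ χ)) := itrans (pl1 ψ φ) (mp (pl2 _ _ _) h)

theorem dni (φ : Form Ags) : Prov (imp φ (neg (neg φ))) :=
  swap (provId (neg φ))

theorem dne (φ : Form Ags) : Prov (imp (neg (neg φ)) φ) :=
  mp (pl3 φ (neg (neg φ))) (dni (neg φ))

theorem contrap {φ ψ : Form Ags} (h : Prov (imp φ ψ)) :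
    Prov (imp (neg ψ) (neg φ)) := swap (itrans h (dni ψ))

theorem contrap' {φ ψ : Form Ags} (h : Prov (imp (neg ψ) (neg φ))) :
    Prov (imp φ ψ) := mp (pl3 ψ φ) h

theorem exFalso (φ : Form Ags) : Prov (imp bot φ) :=
  mp (pl3 φ bot) (ded (provId bot))

theorem bcomp {ψ χ : Form Ags} (φ : Form Ags) (h : Prov (imp ψ χ)) :
    Prov (imp (imp φ ψ) (imp φ χ)) := mp (pl2 _ _ _) (ded h)

theorem conjE1 (φ ψ : Form Ags) : Prov (imp (conj φ ψ) φ) :=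
  mp (pl3 φ (conj φ ψ)) (itrans (bcomp φ (exFalso (neg ψ))) (dni (imp φ (neg ψ))))

theorem conjE2 (φ ψ : Form Ags) : Prov (imp (conj φ ψ) ψ) :=
  mp (pl3 ψ (conj φ ψ)) (itrans (pl1 (neg ψ) φ) (dni (imp φ (neg ψ))))

theorem negElimImp {χ φ : Form Ags} (h1 : Prov (imp χ φ))
    (h2 : Prov (imp χ (neg φ))) : Prov (imp χ bot) := mpd h2 h1

theorem box_mono {φ ψ : Form Ags} (h : Prov (imp φ ψ)) :
    Prov (imp (box φ) (box ψ)) := mp (boxK _ _) (boxNec h)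

theorem know_mono {φ ψ : Form Ags} (a : Ags) (h : Prov (imp φ ψ)) :
    Prov (imp (know a φ) (know a ψ)) := mp (knowK a _ _) (knowNec a h)

/-- S5 theorem for `□`: `◇□φ → □φ`. -/
theorem dia_box (φ : Form Ags) : Prov (imp (dia (box φ)) (box φ)) := by
  have h1 : Prov (imp (box (dia (neg φ))) (box (neg (box φ)))) :=
    box_mono (Ags := Ags) (contrap (box_mono (dni φ)))
  have h2 : Prov (imp (dia (box φ)) (neg (box (dia (neg φ))))) := contrap h1
  have h3 : Prov (imp (neg (dia (neg φ))) (box φ)) :=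
    itrans (dne (box (neg (neg φ)))) (box_mono (dne φ))
  exact itrans (itrans h2 (contrap (box5 (neg φ)))) h3

/-- `◇K_α□φ → K_α□φ`. -/
theorem keyL (a : Ags) (φ : Form Ags) :
    Prov (imp (dia (know a (box φ))) (know a (box φ))) :=
  itrans (unifH a (box φ)) (know_mono a (dia_box φ))

/-- `¬K_α□φ → □¬K_α□φ`. -/
theorem keyL' (a : Ags) (φ : Form Ags) :
    Prov (imp (neg (know a (box φ))) (box (neg (know a (box φ))))) :=
  itrans (contrap (keyL a φ)) (dne (box (neg (know a (box φ)))))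

/-- T for the composite. -/
theorem mT (a : Ags) (φ : Form Ags) : Prov (imp (know a (box φ)) φ) :=
  itrans (knowT a (box φ)) (boxT φ)

/-- 5 for the composite. -/
theorem m5 (a : Ags) (φ : Form Ags) :
    Prov (imp (neg (know a (box φ)))
      (know a (box (neg (know a (box φ)))))) :=
  itrans (know5 a (box φ)) (know_mono a (keyL' a φ))

theorem m_mono {φ ψ : Form Ags} (a : Ags) (h : Prov (imp φ ψ)) :
    Prov (imp (know a (box φ)) (know a (box ψ))) :=
  know_mono a (box_mono h)

/-- B for the composite. -/
theorem mB (a : Ags) (ψ : Form Ags) :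
    Prov (imp ψ (know a (box (neg (know a (box (neg ψ))))))) :=
  itrans (itrans (dni ψ) (contrap (mT a (neg ψ)))) (m5 a (neg ψ))

/-- 4 for the composite. -/
theorem m4 (a : Ags) (φ : Form Ags) :
    Prov (imp (know a (box φ))
      (know a (box (know a (box φ))))) :=
  itrans (mB a (know a (box φ)))
    (m_mono a (itrans (contrap (m5 a φ)) (dne (know a (box φ)))))

/-- An MCS cannot contain both `φ` and `¬φ`. -/
theorem mcs_not_both {w : Set (Form Ags)} (hw : MCS w) (φ : Form Ags) :
    ¬(φ ∈ w ∧ neg φ ∈ w) := by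
  rintro ⟨h1, h2⟩
  apply hw.1
  refine ⟨[φ, neg φ], ?_, ?_⟩
  · intro χ hχ
    simp only [List.mem_cons, List.mem_singleton, List.not_mem_nil, or_false] at hχ
    rcases hχ with rfl | rfl <;> assumption
  · have e1 : Prov (imp (conjl [φ, neg φ]) φ) := conjE1 _ _
    have e2 : Prov (imp (conjl [φ, neg φ]) (neg φ)) :=
      itrans (conjE2 φ _) (conjE1 _ _)
    exact negElimImp e1 e2

/-- MCS is closed under provable implications. -/
theorem mcs_closed {w : Set (Form Ags)} (hw : MCS w) {φ ψ : Form Ags}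
    (hφ : φ ∈ w) (h : Prov (imp φ ψ)) : ψ ∈ w := by
  rcases hw.2 ψ with hψ | hψ
  · exact hψ
  exfalso
  apply hw.1
  refine ⟨[φ, neg ψ], ?_, ?_⟩
  · intro χ hχ
    simp only [List.mem_cons, List.mem_singleton, List.not_mem_nil, or_false] at hχ
    rcases hχ with rfl | rfl <;> assumption
  · have e1 : Prov (imp (conjl [φ, neg ψ]) φ) := conjE1 _ _
    have e2 : Prov (imp (conjl [φ, neg ψ]) (neg ψ)) :=
      itrans (conjE2 φ _) (conjE1 _ _)
    exact negElimImp (itrans e1 h) e2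

end ProvAux
end Helpers

/-- The S5 laws of the composite operator `K_α□` are derivable in `Λ`, and
consequently the canonical relation `α_k` is an equivalence relation on the
maximal consistent sets. -/
theorem statement15 {Ags : Type} (a : Ags) :
    (∀ φ : Form Ags, Prov (Form.imp (Form.know a (Form.box φ)) φ)) ∧
    (∀ φ : Form Ags,
      Prov (Form.imp (Form.know a (Form.box φ))
        (Form.know a (Form.box (Form.know a (Form.box φ)))))) ∧
    (∀ φ : Form Ags,
      Prov (Form.imp (Form.neg (Form.know a (Form.box φ)))
        (Form.know a (Form.box (Form.neg (Form.know a (Form.box φ))))))) ∧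
    (∀ w : Set (Form Ags), MCS w → alphak a w w) ∧
    (∀ w v : Set (Form Ags), MCS w → MCS v → alphak a w v → alphak a v w) ∧
    (∀ w v u : Set (Form Ags), MCS w → MCS v → MCS u →
      alphak a w v → alphak a v u → alphak a w u) := by
  open ProvAux in
  refine ⟨fun φ => mT a φ, fun φ => m4 a φ, fun φ => m5 a φ, ?_, ?_, ?_⟩
  · intro w hw φ hφ
    exact mcs_closed hw hφ (mT a φ)
  · intro w v hw hv hwv φ hφ
    rcases hw.2 φ with h | h
    · exact h
    · exfalso
      have h1 : Form.neg (Form.know a (Form.box φ)) ∈ w := by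
        rcases hw.2 (Form.know a (Form.box φ)) with h2 | h2
        · exact absurd ⟨mcs_closed hw h2 (mT a φ), h⟩ (mcs_not_both hw φ)
        · exact h2
      have h2 := mcs_closed hw h1 (m5 a φ)
      exact mcs_not_both hv _ ⟨hφ, hwv _ h2⟩
  · intro w v u hw hv hu hwv hvu φ hφ
    exact hvu φ (hwv _ (mcs_closed hw hφ (m4 a φ)))
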